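/- arXiv:1303.6976 — 2 statements merged into one kernel-verified Lean document; each statement's English description precedes it below -/
import Mathlib

section
/- Let G = (G_i, P_i)_{i∈I} be a qualitative game where each G_i is a nonempty compact subset of a Hausdorff topological vector space, each P_i has open lower sections (P_i⁻¹(y_i) = {x : y_i ∈ P_i(x)} is open for each y_i) and convex values, and x_i ∉ P_i(x) for all x. Then for any fast →-reduction step G → H, each surviving set H_i = {x_i ∈ G_i : ⋂_{x_{-i} ∈ G_{-i}} P_i(x_i, x_{-i}) = ∅} is closed in G_i, hence compact. Moreover H_i is nonempty, provided that whenever some strategy is strictly dominated, there exists an undominated dominator (Condition C at stage 0). -/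
/-- The set `⋂_{x_{-i} ∈ S_{-i}} P_i(x_i, x_{-i})` of common dominators of
strategy `xi` of player `i` relative to the family of strategy sets `S`. -/
def domSet {I : Type*} [DecidableEq I] {E : I → Type*}
    (P : ∀ i, (∀ j, E j) → Set (E i)) (S : ∀ i, Set (E i)) (i : I) (xi : E i) :
    Set (E i) :=
  ⋂ x ∈ {x : ∀ j, E j | ∀ j, j ≠ i → x j ∈ S j}, P i (Function.update x i xi)

/-- For a qualitative game with nonempty compact strategy sets
`G_i` in Hausdorff topological vector spaces, preferences with open lower
sections and convex values, and `x_i ∉ P_i(x)`, for a fast `→`-step `G → H`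
each surviving set `H_i = {x_i ∈ G_i : ⋂_{x_{-i} ∈ G_{-i}} P_i(x_i,x_{-i}) = ∅}`
is closed (in `G_i`), hence compact; moreover `H_i` is nonempty, provided
every strictly dominated strategy has an undominated dominator (Condition C). -/
theorem stmt_13 {I : Type*} [DecidableEq I] {E : I → Type*}
    [∀ i, AddCommGroup (E i)] [∀ i, Module ℝ (E i)]
    [∀ i, TopologicalSpace (E i)] [∀ i, T2Space (E i)]
    [∀ i, IsTopologicalAddGroup (E i)] [∀ i, ContinuousSMul ℝ (E i)]
    (G : ∀ i, Set (E i))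
    (hGc : ∀ i, IsCompact (G i)) (hGne : ∀ i, (G i).Nonempty)
    (P : ∀ i, (∀ j, E j) → Set (E i))
    (hPval : ∀ i (x : ∀ j, E j), P i x ⊆ G i)
    (hopen : ∀ i (yi : E i), IsOpen {x : ∀ j, E j | yi ∈ P i x})
    (hconv : ∀ i (x : ∀ j, E j), Convex ℝ (P i x))
    (hirr : ∀ i (x : ∀ j, E j), x i ∉ P i x)
    -- Condition C at stage 0
    (hC : ∀ i, ∀ xi ∈ G i, (domSet P G i xi).Nonempty →
      ∃ xs, xs ∈ domSet P G i xi ∧ domSet P G i xs = ∅) :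
    ∀ i, IsClosed {xi ∈ G i | domSet P G i xi = ∅} ∧
      IsCompact {xi ∈ G i | domSet P G i xi = ∅} ∧
      {xi ∈ G i | domSet P G i xi = ∅}.Nonempty := by

  intro i
  have hmemdom : ∀ (xi yi : E i), yi ∈ domSet P G i xi ↔
      ∀ x : ∀ j, E j, (∀ j, j ≠ i → x j ∈ G j) → yi ∈ P i (Function.update x i xi) := by
    intro xi yi
    simp [domSet, Set.mem_iInter]
  have hclosed : IsClosed {xi ∈ G i | domSet P G i xi = ∅} := by
    rw [← isOpen_compl_iff, isOpen_iff_forall_mem_open]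
    intro xi hxi
    by_cases hg : xi ∈ G i
    · have hne : (domSet P G i xi).Nonempty := by
        by_contra h
        exact hxi ⟨hg, Set.not_nonempty_iff_eq_empty.mp h⟩
      obtain ⟨yi, hyi⟩ := hne
      have hKc : IsCompact (Set.pi Set.univ G) := isCompact_univ_pi hGc
      have hcont : Continuous fun p : E i × (∀ j, E j) => Function.update p.2 i p.1 := by
        refine continuous_pi fun j => ?_
        rcases eq_or_ne j i with rfl | hj
        · simpa using continuous_fst
        · simp only [Function.update_of_ne hj]
          exact (continuous_apply j).comp continuous_snd
      have hVopen : IsOpen {p : E i × (∀ j, E j) | yi ∈ P i (Function.update p.2 i p.1)} :=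
        (hopen i yi).preimage hcont
      have hsub : ({xi} ×ˢ Set.pi Set.univ G : Set (E i × (∀ j, E j))) ⊆
          {p : E i × (∀ j, E j) | yi ∈ P i (Function.update p.2 i p.1)} := by
        rintro ⟨a, x⟩ ⟨ha, hx⟩
        simp only [Set.mem_singleton_iff] at ha
        subst ha
        exact (hmemdom _ yi).mp hyi x fun j _ => hx j (Set.mem_univ j)
      obtain ⟨u, v, hu, _, hxu, hKv, huv⟩ :=
        generalized_tube_lemma isCompact_singleton hKc hVopen hsub
      refine ⟨u, ?_, hu, hxu rfl⟩
      intro xi' hxi' hmem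
      have : yi ∈ domSet P G i xi' := by
        rw [hmemdom]
        intro x hx
        obtain ⟨gi, hgi⟩ := hGne i
        have hx' : Function.update x i gi ∈ Set.pi Set.univ G := by
          intro j _
          rcases eq_or_ne j i with rfl | hj
          · simpa using hgi
          · simpa [Function.update_of_ne hj] using hx j hj
        have := huv (Set.mk_mem_prod hxi' (hKv hx'))
        simpa [Function.update_idem] using this
      rw [hmem.2] at this
      exact this
    · exact ⟨(G i)ᶜ, fun z hz hmem => hz hmem.1, (hGc i).isClosed.isOpen_compl, hg⟩
  refine ⟨hclosed, (hGc i).of_isClosed_subset hclosed (Set.sep_subset _ _), ?_⟩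
  obtain ⟨xi, hxi⟩ := hGne i
  by_cases h : domSet P G i xi = ∅
  · exact ⟨xi, hxi, h⟩
  · obtain ⟨xs, hxs, hxs'⟩ := hC i xi hxi (Set.nonempty_iff_ne_empty.mpr h)
    have hxsG : xs ∈ G i := by
      classical
      obtain ⟨x, hx⟩ : ∃ x : ∀ j, E j, ∀ j, j ≠ i → x j ∈ G j :=
        ⟨fun j => (hGne j).choose, fun j _ => (hGne j).choose_spec⟩
      exact hPval i _ ((hmemdom xi xs).mp hxs x hx)
    exact ⟨xs, hxsG, hxs'⟩
end

section
/- Let G = (G_i, P_i)_{i∈I} with each G_i a nonempty compact subset of a Hausdorff topological vector space, each P_i with open lower sections, x_i ∉ P_i(x) for all x, and suppose each R^t in the unique fast →-reduction sequence R⁰ = G, R^t → R^{t+1} fast, has nonempty compact components R^t_i with M_i = ⋂_t R^t_i. Then M = (M_i) is a maximal reduction: for all i, x_i ∈ M_i, and y_i ∈ M_i, we have y_i ∉ ⋂_{x_{-i} ∈ M_{-i}} P_i(x_i, x_{-i}); moreover each M_i is nonempty and compact. -/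
/-- For a qualitative game with nonempty compact strategy sets
`G_i` in Hausdorff topological vector spaces, preferences with open lower
sections, `x_i ∉ P_i(x)`, if each stage `R^t` of the unique fast `→`-reduction
sequence has nonempty compact components, then `M_i = ⋂_t R^t_i` is nonempty
and compact, and `M` is a maximal reduction: no `x_i ∈ M_i` is strictly
dominated by any `y_i ∈ M_i` relative to `M`. -/
theorem stmt_14 {I : Type*} [DecidableEq I] {E : I → Type*}
    [∀ i, AddCommGroup (E i)] [∀ i, Module ℝ (E i)]
    [∀ i, TopologicalSpace (E i)] [∀ i, T2Space (E i)]
    [∀ i, IsTopologicalAddGroup (E i)] [∀ i, ContinuousSMul ℝ (E i)]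
    (G : ∀ i, Set (E i))
    (hGc : ∀ i, IsCompact (G i)) (hGne : ∀ i, (G i).Nonempty)
    (P : ∀ i, (∀ j, E j) → Set (E i))
    (hopen : ∀ i (yi : E i), IsOpen {x : ∀ j, E j | yi ∈ P i x})
    (hirr : ∀ i (x : ∀ j, E j), x i ∉ P i x)
    -- the unique fast `→`-reduction sequence
    (R : ℕ → ∀ i, Set (E i)) (hR0 : ∀ i, R 0 i = G i)
    (hRf : ∀ t i, R (t + 1) i = {xi ∈ R t i | ¬ (domSet P (R t) i xi).Nonempty})
    (hRc : ∀ t i, IsCompact (R t i)) (hRne : ∀ t i, (R t i).Nonempty)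
    (M : ∀ i, Set (E i)) (hM : ∀ i, M i = ⋂ t, R t i) :
    ∀ i, (M i).Nonempty ∧ IsCompact (M i) ∧
      ∀ xi ∈ M i, ∀ yi ∈ M i, yi ∉ domSet P M i xi := by
  have hsub : ∀ t i, R (t + 1) i ⊆ R t i := by
    intro t i x hx
    rw [hRf] at hx
    exact hx.1
  have hclosed : ∀ t i, IsClosed (R t i) := fun t i => (hRc t i).isClosed
  intro i
  have hMc : IsCompact (M i) := by
    rw [hM]
    exact (hRc 0 i).of_isClosed_subset (isClosed_iInter fun t => hclosed t i)
      (Set.iInter_subset _ 0)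
  have hMne : (M i).Nonempty := by
    rw [hM]
    exact IsCompact.nonempty_iInter_of_sequence_nonempty_isCompact_isClosed
      (fun t => R t i) (fun t => hsub t i) (fun t => hRne t i) (hRc 0 i)
      (fun t => hclosed t i)
  refine ⟨hMne, hMc, ?_⟩
  intro xi hxi yi hyi hdom
  have hMsub : ∀ t j, M j ⊆ R t j := by
    intro t j
    rw [hM]
    exact Set.iInter_subset _ t
  -- the closed set where `yi` does not dominate
  have hBclosed : IsClosed {x : ∀ j, E j | yi ∉ P i (Function.update x i xi)} := by
    have hc : Continuous fun x : ∀ j, E j => Function.update x i xi :=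
      continuous_id.update i continuous_const
    have h : IsOpen {x : ∀ j, E j | yi ∈ P i (Function.update x i xi)} :=
      (hopen i yi).preimage hc
    simpa [Set.compl_setOf] using h.isClosed_compl
  set A : ℕ → Set (∀ j, E j) := fun t =>
    Set.pi Set.univ (R t) ∩ {x | yi ∉ P i (Function.update x i xi)} with hA
  have hAclosed : ∀ t, IsClosed (A t) :=
    fun t => (isClosed_set_pi fun j _ => hclosed t j).inter hBclosed
  have hAcomp : ∀ t, IsCompact (A t) :=
    fun t => (isCompact_univ_pi fun j => hRc t j).inter_right hBclosed
  have hAsub : ∀ t, A (t + 1) ⊆ A t := by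
    intro t x hx
    exact ⟨fun j hj => hsub t j (hx.1 j hj), hx.2⟩
  have hAne : ∀ t, (A t).Nonempty := by
    intro t
    -- xi ∈ R (t+1) i, so domSet P (R t) i xi is empty
    have hxi' : xi ∈ R (t + 1) i := hMsub (t + 1) i hxi
    rw [hRf] at hxi'
    have hempty := hxi'.2
    have hyi' : yi ∉ domSet P (R t) i xi := fun h => hempty ⟨yi, h⟩
    rw [domSet, Set.mem_iInter₂] at hyi'
    push_neg at hyi'
    obtain ⟨x, hxmem, hxP⟩ := hyi'
    obtain ⟨z, hz⟩ := hRne t i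
    refine ⟨Function.update x i z, ⟨?_, ?_⟩⟩
    · intro j _
      by_cases hji : j = i
      · subst hji; simpa using hz
      · rw [Function.update_of_ne hji]
        exact hxmem j hji
    · show yi ∉ P i (Function.update (Function.update x i z) i xi)
      rw [Function.update_idem]
      exact hxP
  obtain ⟨x, hx⟩ := IsCompact.nonempty_iInter_of_sequence_nonempty_isCompact_isClosed
    A hAsub hAne (hAcomp 0) hAclosed
  rw [Set.mem_iInter] at hx
  have hxM : ∀ j, x j ∈ M j := by
    intro j
    rw [hM, Set.mem_iInter]
    exact fun t => (hx t).1 j (Set.mem_univ j)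
  have := Set.mem_iInter₂.mp hdom x (fun j _ => hxM j)
  exact (hx 0).2 this
end
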